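/- Fix Δx > 0 and a grid point x_i, with neighboring nodes x_{i±1} = x_i ± Δx. Given real numbers u₋₁, u₀, u₁, v₋₁, v₁, there exists a unique real polynomial q₀ of degree at most 4 with q₀(x_{i+l}) = u_l for l = −1, 0, 1 and q₀'(x_{i+l}) = v_l for l = −1, 1. Moreover q₀'(x_i) = (3/(4Δx))(u₁ − u₋₁) − (1/4)(v₋₁ + v₁). -/

import Mathlib

open Polynomial

/-- The explicit Hermite–Birkhoff quartic interpolant. -/
noncomputable def hwenoQ0 (Δx xi um u0 u1 vm v1 : ℝ) : Polynomial ℝ :=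
  C u0 + C ((3*(u1-um) - (vm+v1)*Δx)/(4*Δx)) * (X - C xi)
    + C ((u1+um-2*u0)/Δx^2 - (v1-vm)/(4*Δx)) * (X - C xi)^2
    + C (((vm+v1)*Δx - (u1-um))/(4*Δx^3)) * (X - C xi)^3
    + C (((v1-vm)*Δx/4 - (u1+um)/2 + u0)/Δx^4) * (X - C xi)^4

lemma hwenoQ0_spec (Δx xi um u0 u1 vm v1 : ℝ) (h : 0 < Δx) :
    (hwenoQ0 Δx xi um u0 u1 vm v1).degree ≤ 4 ∧
    (hwenoQ0 Δx xi um u0 u1 vm v1).eval (xi - Δx) = um ∧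
    (hwenoQ0 Δx xi um u0 u1 vm v1).eval xi = u0 ∧
    (hwenoQ0 Δx xi um u0 u1 vm v1).eval (xi + Δx) = u1 ∧
    (hwenoQ0 Δx xi um u0 u1 vm v1).derivative.eval (xi - Δx) = vm ∧
    (hwenoQ0 Δx xi um u0 u1 vm v1).derivative.eval (xi + Δx) = v1 ∧
    (hwenoQ0 Δx xi um u0 u1 vm v1).derivative.eval xi
      = (3 / (4 * Δx)) * (u1 - um) - (1 / 4) * (vm + v1) := by
  have h0 : Δx ≠ 0 := ne_of_gt h
  refine ⟨?_, ?_, ?_, ?_, ?_, ?_, ?_⟩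
  · unfold hwenoQ0; compute_degree
  all_goals
  · simp only [hwenoQ0, derivative_add, derivative_mul, derivative_pow, derivative_C,
      derivative_X, derivative_sub, eval_add, eval_mul, eval_pow, eval_sub, eval_C, eval_X,
      eval_zero, eval_one]
    field_simp
    try ring

lemma hweno_dbl_root_dvd (r : Polynomial ℝ) (a : ℝ) (h1 : r.eval a = 0)
    (h2 : r.derivative.eval a = 0) : (X - C a)^2 ∣ r := by
  obtain ⟨s, hs⟩ := (dvd_iff_isRoot (p := r) (a := a)).2 h1
  have hd : r.derivative = s + (X - C a) * s.derivative := by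
    rw [hs, derivative_mul]; simp
  have hsa : s.eval a = 0 := by
    have := h2
    rw [hd] at this
    simpa using this
  obtain ⟨t, ht⟩ := (dvd_iff_isRoot (p := s) (a := a)).2 hsa
  exact ⟨t, by rw [hs, ht]; ring⟩

lemma hweno_aux_zero (r : Polynomial ℝ) (a b c : ℝ) (hab : a ≠ b) (hac : a ≠ c) (hbc : b ≠ c)
    (hdeg : r.degree ≤ 4) (h1 : r.eval a = 0) (h2 : r.eval b = 0) (h3 : r.eval c = 0)
    (h4 : r.derivative.eval a = 0) (h5 : r.derivative.eval b = 0) : r = 0 := by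
  have da := hweno_dbl_root_dvd r a h1 h4
  have db := hweno_dbl_root_dvd r b h2 h5
  have dc : (X - C c) ∣ r := (dvd_iff_isRoot).2 h3
  have cab : IsCoprime ((X - C a)^2) ((X - C b)^2) :=
    (isCoprime_X_sub_C_of_isUnit_sub (by simpa using sub_ne_zero.2 hab)).pow
  have cabc : IsCoprime ((X - C a)^2 * (X - C b)^2) (X - C c) := by
    apply IsCoprime.mul_left
    · exact ((isCoprime_X_sub_C_of_isUnit_sub (by simpa using sub_ne_zero.2 hac)).pow_left)
    · exact ((isCoprime_X_sub_C_of_isUnit_sub (by simpa using sub_ne_zero.2 hbc)).pow_left)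
  have dall : (X - C a)^2 * (X - C b)^2 * (X - C c) ∣ r := cabc.mul_dvd (cab.mul_dvd da db) dc
  by_contra hr
  have hdeg5 : ((X - C a)^2 * (X - C b)^2 * (X - C c) : Polynomial ℝ).degree = 5 := by
    simp [degree_mul, degree_pow, degree_X_sub_C]
    rfl
  have := degree_le_of_dvd dall hr
  rw [hdeg5] at this
  exact absurd (this.trans hdeg) (by decide)

/-- Hermite-Birkhoff interpolation for the HWENO derivative modification: there is a
unique quartic polynomial `q₀` matching values `u₋₁, u₀, u₁` at `x_{i−1}, x_i, x_{i+1}`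
and derivatives `v₋₁, v₁` at `x_{i−1}, x_{i+1}`, and its derivative at `x_i` equals
`(3/(4Δx))(u₁ − u₋₁) − (1/4)(v₋₁ + v₁)`. -/
theorem stmt9 (Δx : ℝ) (hΔx : 0 < Δx) (xi : ℝ) (um u0 u1 vm v1 : ℝ) :
    (∃! q : Polynomial ℝ, q.degree ≤ 4 ∧
      q.eval (xi - Δx) = um ∧ q.eval xi = u0 ∧ q.eval (xi + Δx) = u1 ∧
      q.derivative.eval (xi - Δx) = vm ∧ q.derivative.eval (xi + Δx) = v1) ∧
    (∀ q : Polynomial ℝ, q.degree ≤ 4 →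
      q.eval (xi - Δx) = um → q.eval xi = u0 → q.eval (xi + Δx) = u1 →
      q.derivative.eval (xi - Δx) = vm → q.derivative.eval (xi + Δx) = v1 →
      q.derivative.eval xi = (3 / (4 * Δx)) * (u1 - um) - (1 / 4) * (vm + v1)) := by
  obtain ⟨hdeg, he1, he2, he3, he4, he5, he6⟩ := hwenoQ0_spec Δx xi um u0 u1 vm v1 hΔx
  set q₀ := hwenoQ0 Δx xi um u0 u1 vm v1 with hq₀
  have ha : xi - Δx ≠ xi + Δx := by intro h; nlinarith [sub_eq_iff_eq_add.mp h]
  have hb : xi - Δx ≠ xi := by intro h; nlinarith [sub_eq_iff_eq_add.mp h]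
  have hc : xi + Δx ≠ xi := by intro h; nlinarith
  have uniq : ∀ q : Polynomial ℝ, q.degree ≤ 4 →
      q.eval (xi - Δx) = um → q.eval xi = u0 → q.eval (xi + Δx) = u1 →
      q.derivative.eval (xi - Δx) = vm → q.derivative.eval (xi + Δx) = v1 → q = q₀ := by
    intro q hqd hq1 hq2 hq3 hq4 hq5
    have hz : q - q₀ = 0 := by
      apply hweno_aux_zero (q - q₀) (xi - Δx) (xi + Δx) xi ha hb hc
      · exact (degree_sub_le q q₀).trans (max_le hqd hdeg)
      · simp [hq1, he1]
      · simp [hq3, he3]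
      · simp [hq2, he2]
      · simp [derivative_sub, hq4, he4]
      · simp [derivative_sub, hq5, he5]
    exact sub_eq_zero.mp hz
  constructor
  · exact ⟨q₀, ⟨hdeg, he1, he2, he3, he4, he5⟩,
      fun q ⟨h1, h2, h3, h4, h5, h6⟩ => uniq q h1 h2 h3 h4 h5 h6⟩
  · intro q h1 h2 h3 h4 h5 h6
    rw [uniq q h1 h2 h3 h4 h5 h6]
    exact he6
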